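/- Let A, B be strings of lengths m and n, σ a character, and define Diff[i,j] = LCS(B[i..n], σ·A[0..j]) − P[i,j] for (i,j) ∈ [0:n]×[0:m]. Assume every entry of the density matrix P□ is nonpositive. Then for all 0 ≤ i ≤ n and 1 ≤ j ≤ m, the pair (i,j) is a step index of Diff (i.e., Diff[i,j] ≠ Diff[i,j−1]) if and only if k = nextmatch(i,σ,B) < ∞ and j = min{ j' ∈ [1:m] : there exists i' with i+1 ≤ i' ≤ k and P□[i',j'] ≠ 0 } (the minimum column index among all pivotal points of P□ in rows i+1,…,k). -/

import Mathlib

variable {α : Type*}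

/-- LCS of two lists: the maximum length of a common sublist. -/
noncomputable def LCS (X Y : List α) : ℕ :=
  sSup {k | ∃ Z : List α, Z.length = k ∧ Z.Sublist X ∧ Z.Sublist Y}

/-- `substr S i j` is S[i..j]: the characters of S at (1-based) positions i+1,…,j. -/
def substr (S : List α) (i j : ℕ) : List α := (S.take j).drop i

/-- The density matrix D□ of a matrix D. -/
def density (D : ℕ → ℕ → ℤ) (i j : ℕ) : ℤ :=
  D i j + D (i - 1) (j - 1) - D (i - 1) j - D i (j - 1)

/-- The all scores matrix K of A and B: K[i,j] = LCS(B[i..j], A) if i ≤ j, else j - i. -/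
noncomputable def Kmat (A B : List α) (i j : ℕ) : ℤ :=
  if i ≤ j then (LCS (substr B i j) A : ℤ) else (j : ℤ) - (i : ℤ)

/-- The all scores matrix P of A and B: P[i,j] = LCS(B[i..n], A[0..j]). -/
noncomputable def Pmat (A B : List α) (i j : ℕ) : ℤ :=
  (LCS (substr B i B.length) (substr A 0 j) : ℤ)

/-- nextmatch(i,σ,B): minimum (1-based) position i' with i < i' ≤ |B| and B[i'] = σ; ⊤ (∞) if none. -/
noncomputable def nextmatch (i : ℕ) (σ : α) (B : List α) : ℕ∞ :=
  sInf {k : ℕ∞ | ∃ k' : ℕ, k = (k' : ℕ∞) ∧ i < k' ∧ k' ≤ B.length ∧ B[k' - 1]? = some σ}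

/-- prevmatch(j,σ,B): maximum (1-based) position i' with 1 ≤ i' ≤ j and B[i'] = σ; ⊥ (−∞) if none. -/
noncomputable def prevmatch (j : ℕ) (σ : α) (B : List α) : WithBot ℕ :=
  sSup {k : WithBot ℕ | ∃ k' : ℕ, k = (k' : WithBot ℕ) ∧ 1 ≤ k' ∧ k' ≤ j ∧ B[k' - 1]? = some σ}

lemma LCS_set_nonempty (X Y : List α) :
    {k | ∃ Z : List α, Z.length = k ∧ Z.Sublist X ∧ Z.Sublist Y}.Nonempty :=
  ⟨0, [], rfl, List.nil_sublist _, List.nil_sublist _⟩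

lemma LCS_set_bdd (X Y : List α) :
    BddAbove {k | ∃ Z : List α, Z.length = k ∧ Z.Sublist X ∧ Z.Sublist Y} := by
  refine ⟨X.length, fun k hk => ?_⟩
  obtain ⟨Z, hZ, hX, _⟩ := hk
  exact hZ ▸ hX.length_le

lemma exists_LCS (X Y : List α) :
    ∃ Z : List α, Z.length = LCS X Y ∧ Z.Sublist X ∧ Z.Sublist Y :=
  Nat.sSup_mem (LCS_set_nonempty X Y) (LCS_set_bdd X Y)

lemma le_LCS {X Y Z : List α} (hX : Z.Sublist X) (hY : Z.Sublist Y) :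
    Z.length ≤ LCS X Y :=
  le_csSup (LCS_set_bdd X Y) ⟨Z, rfl, hX, hY⟩

lemma LCS_le {X Y : List α} {k : ℕ}
    (h : ∀ Z : List α, Z.Sublist X → Z.Sublist Y → Z.length ≤ k) :
    LCS X Y ≤ k := by
  refine csSup_le (LCS_set_nonempty X Y) fun t ht => ?_
  obtain ⟨Z, hZ, hX, hY⟩ := ht
  exact hZ ▸ h Z hX hY

lemma LCS_mono_left {X X' : List α} (h : X.Sublist X') (Y : List α) :
    LCS X Y ≤ LCS X' Y := by
  refine LCS_le fun Z hX hY => le_LCS (hX.trans h) hY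

lemma LCS_nil_right (X : List α) : LCS X ([] : List α) = 0 :=
  Nat.le_zero.mp (LCS_le fun Z _ hY => by simp [List.sublist_nil.mp hY])

/-- If σ does not occur in Y, prepending σ to W doesn't change LCS. -/
lemma LCS_cons_of_not_mem {Y W : List α} {σ : α} (h : σ ∉ Y) :
    LCS Y (σ :: W) = LCS Y W := by
  refine le_antisymm (LCS_le fun Z hY hW => ?_) (LCS_le fun Z hY hW => ?_)
  · rcases List.sublist_cons_iff.mp hW with hW' | ⟨r, rfl, hr⟩
    · exact le_LCS hY hW'
    · exact absurd (hY.mem List.mem_cons_self) h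
  · exact le_LCS hY (hW.trans (List.sublist_cons_self _ _))

/-- Key recurrence: if σ first occurs in Y at 0-based index k, then
LCS(Y, σ::W) = max (LCS Y W) (1 + LCS (Y.drop (k+1)) W). -/
lemma LCS_cons_of_first {Y W : List α} {σ : α} {k : ℕ}
    (hk : Y[k]? = some σ) (hfirst : σ ∉ Y.take k) :
    LCS Y (σ :: W) = max (LCS Y W) (1 + LCS (Y.drop (k + 1)) W) := by
  have hklt : k < Y.length := by
    by_contra hlt
    simp [List.getElem?_eq_none (Nat.le_of_not_lt hlt)] at hk
  have hYk : Y[k] = σ := by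
    have := List.getElem?_eq_getElem hklt
    rw [this] at hk; exact Option.some.inj hk
  have hdropk : Y.drop k = σ :: Y.drop (k + 1) := by
    rw [List.drop_eq_getElem_cons hklt, hYk]
  refine le_antisymm (LCS_le fun Z hY hW => ?_) (max_le ?_ ?_)
  · rcases List.sublist_cons_iff.mp hW with hW' | ⟨r, rfl, hr⟩
    · exact le_trans (le_LCS hY hW') (le_max_left _ _)
    · obtain ⟨r₁, r₂, hYeq, hmem, hr₂⟩ := List.cons_sublist_iff.mp hY
      have hlen : k + 1 ≤ r₁.length := by
        by_contra hlt
        have hle : r₁.length ≤ k := Nat.lt_succ_iff.mp (Nat.lt_of_not_le hlt)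
        have : r₁ = (Y.take k).take r₁.length := by
          rw [List.take_take, min_eq_left hle, hYeq, List.take_left]
        exact hfirst (List.mem_of_mem_take (this ▸ hmem))
      have hr₂' : r₂.Sublist (Y.drop (k + 1)) := by
        have h1 : r₂ = Y.drop r₁.length := by rw [hYeq, List.drop_left]
        have h2 : Y.drop r₁.length = (Y.drop (k + 1)).drop (r₁.length - (k + 1)) := by
          rw [List.drop_drop, Nat.add_sub_cancel' hlen]
        rw [h1, h2]
        exact List.drop_sublist _ _
      have hrl : r.length ≤ LCS (Y.drop (k + 1)) W := le_LCS (hr₂.trans hr₂') hr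
      have : (σ :: r).length ≤ 1 + LCS (Y.drop (k + 1)) W := by
        simp only [List.length_cons]; omega
      exact le_trans this (le_max_right _ _)
  · refine LCS_le fun Z hY hW => le_LCS hY (hW.trans (List.sublist_cons_self _ _))
  · obtain ⟨Z, hZ, hX, hY⟩ := exists_LCS (Y.drop (k + 1)) W
    have h1 : (σ :: Z).Sublist Y := by
      have : (σ :: Z).Sublist (Y.take k ++ (σ :: Y.drop (k + 1))) :=
        (List.cons_sublist_cons.mpr hX).trans (List.sublist_append_right _ _)
      rw [← hdropk, List.take_append_drop] at this
      exact this
    have h2 : (σ :: Z).Sublist (σ :: W) := List.cons_sublist_cons.mpr hY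
    have := le_LCS h1 h2
    simpa [hZ, Nat.add_comm] using this

/-- Telescoping sum. -/
lemma telescope_sum (g : ℕ → ℤ) (i : ℕ) :
    ∀ k, i ≤ k → ∑ i' ∈ Finset.Icc (i + 1) k, (g i' - g (i' - 1)) = g k - g i := by
  intro k
  induction k with
  | zero =>
    intro h
    have : i = 0 := Nat.le_zero.mp h
    subst this
    simp
  | succ k ih =>
    intro h
    rcases Nat.lt_or_ge i (k + 1) with h' | h'
    · have hik : i ≤ k := Nat.lt_succ_iff.mp h'
      rw [Finset.sum_Icc_succ_top (by omega : i + 1 ≤ k + 1), ih hik]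
      simp only [Nat.add_sub_cancel]
      ring
    · have : i = k + 1 := le_antisymm h h'
      subst this
      rw [show Finset.Icc (k + 1 + 1) (k + 1) = ∅ by
        apply Finset.Icc_eq_empty; omega]
      simp

/-- (i,j) is a step index of Diff iff k = nextmatch(i,σ,B) < ∞ and
j is the minimum column index among all pivotal points of P□ in rows i+1,…,k. -/
theorem stmt_15 {α : Type*} (A B : List α) (m n : ℕ)
    (hA : A.length = m) (hB : B.length = n) (σ : α)
    (hNonpos : ∀ i, 1 ≤ i → i ≤ n → ∀ j, 1 ≤ j → j ≤ m →
      density (Pmat A B) i j ≤ 0) :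
    ∀ i ≤ n, ∀ j, 1 ≤ j → j ≤ m →
      (((LCS (substr B i n) (σ :: substr A 0 j) : ℤ) - Pmat A B i j) ≠
          ((LCS (substr B i n) (σ :: substr A 0 (j - 1)) : ℤ) - Pmat A B i (j - 1)) ↔
        ∃ k : ℕ, nextmatch i σ B = (k : ℕ∞) ∧
          (∃ i', i + 1 ≤ i' ∧ i' ≤ k ∧ density (Pmat A B) i' j ≠ 0) ∧
          (∀ j', 1 ≤ j' → j' ≤ m →
            (∃ i', i + 1 ≤ i' ∧ i' ≤ k ∧ density (Pmat A B) i' j' ≠ 0) →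
            j ≤ j')) := by
  subst hA hB
  intro i hi j hj1 hjm
  have hsubB : ∀ i', substr B i' B.length = B.drop i' := by
    intro i'; simp [substr]
  have hsubA : ∀ t, substr A 0 t = A.take t := by
    intro t; simp [substr]
  have hP : ∀ i' t, Pmat A B i' t = (LCS (B.drop i') (A.take t) : ℤ) := by
    intro i' t; rw [Pmat, hsubB, hsubA]
  -- the set of match positions
  set T : Set ℕ := {k' | i < k' ∧ k' ≤ B.length ∧ B[k' - 1]? = some σ} with hT
  by_cases hTne : T.Nonempty
  case neg =>
    -- no match: no step and RHS is impossible
    have hnotmem : σ ∉ B.drop i := by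
      intro hmem
      obtain ⟨t, ht⟩ := List.mem_iff_getElem?.mp hmem
      rw [List.getElem?_drop] at ht
      obtain ⟨hlt, -⟩ := List.getElem?_eq_some_iff.mp ht
      exact hTne ⟨i + t + 1, by omega, by omega, by simpa using ht⟩
    constructor
    · intro hstep
      exfalso
      apply hstep
      rw [hsubB, hsubA, hsubA, hP, hP,
        LCS_cons_of_not_mem hnotmem, LCS_cons_of_not_mem hnotmem]
      ring
    · rintro ⟨k, hk, -, -⟩
      exfalso
      have : ({k : ℕ∞ | ∃ k' : ℕ, k = (k' : ℕ∞) ∧ i < k' ∧ k' ≤ B.length ∧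
          B[k' - 1]? = some σ} : Set ℕ∞) = ∅ := by
        ext x
        simp only [Set.mem_setOf_eq, Set.mem_empty_iff_false, iff_false]
        rintro ⟨k', rfl, h1, h2, h3⟩
        exact hTne ⟨k', h1, h2, h3⟩
      rw [nextmatch, this, sInf_empty] at hk
      exact (ENat.top_ne_coe k) hk
  case pos =>
    set k0 : ℕ := sInf T with hk0def
    have hk0mem : k0 ∈ T := Nat.sInf_mem hTne
    obtain ⟨hik0, hk0n, hk0σ⟩ := hk0mem
    have hk0min : ∀ k' ∈ T, k0 ≤ k' := fun k' hk' => Nat.sInf_le hk'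
    -- nextmatch = k0
    have hnext : nextmatch i σ B = (k0 : ℕ∞) := by
      apply le_antisymm
      · exact sInf_le ⟨k0, rfl, hik0, hk0n, hk0σ⟩
      · apply le_sInf
        rintro x ⟨k', rfl, h1, h2, h3⟩
        exact_mod_cast hk0min k' ⟨h1, h2, h3⟩
    -- the LCS recurrence at the first match
    have hrecur : ∀ W : List α,
        LCS (B.drop i) (σ :: W) = max (LCS (B.drop i) W) (1 + LCS (B.drop k0) W) := by
      intro W
      have hidx : (B.drop i)[k0 - 1 - i]? = some σ := by
        rw [List.getElem?_drop, show i + (k0 - 1 - i) = k0 - 1 by omega]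
        exact hk0σ
      have hfirst : σ ∉ (B.drop i).take (k0 - 1 - i) := by
        intro hmem
        obtain ⟨t, ht⟩ := List.mem_iff_getElem?.mp hmem
        rw [List.getElem?_take] at ht
        split at ht
        · rw [List.getElem?_drop] at ht
          have := hk0min (i + t + 1) ⟨by omega, by
            obtain ⟨hlt, -⟩ := List.getElem?_eq_some_iff.mp ht
            omega, by simpa using ht⟩
          omega
        · exact (Option.some_ne_none σ ht.symm).elim
      have := LCS_cons_of_first (W := W) hidx hfirst
      rwa [show k0 - 1 - i + 1 = k0 - i by omega, List.drop_drop,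
        show i + (k0 - i) = k0 by omega] at this
    -- f t = P i t - P k0 t
    set f : ℕ → ℤ := fun t => Pmat A B i t - Pmat A B k0 t with hfdef
    have hf0 : f 0 = 0 := by
      simp [hfdef, hP, substr, LCS_nil_right]
    have hfnn : ∀ t, 0 ≤ f t := by
      intro t
      have hsub : (B.drop k0).Sublist (B.drop i) := by
        rw [show k0 = i + (k0 - i) by omega, ← List.drop_drop]
        exact List.drop_sublist _ _
      simp only [hfdef, hP, sub_nonneg, Nat.cast_le]
      exact LCS_mono_left hsub _
    -- sum of densities
    have hsum : ∀ t, 1 ≤ t →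
        f t - f (t - 1) = -∑ i' ∈ Finset.Icc (i + 1) k0, density (Pmat A B) i' t := by
      intro t ht
      have := telescope_sum (fun s => Pmat A B s t - Pmat A B s (t - 1)) i k0 (by omega)
      have hcongr : ∑ i' ∈ Finset.Icc (i + 1) k0, density (Pmat A B) i' t =
          ∑ i' ∈ Finset.Icc (i + 1) k0,
            ((Pmat A B i' t - Pmat A B i' (t - 1)) -
             (Pmat A B (i' - 1) t - Pmat A B (i' - 1) (t - 1))) := by
        apply Finset.sum_congr rfl
        intro x hx
        simp only [density]; ring
      rw [hcongr, this]
      simp only [hfdef]; ring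
    have hstepiff : ∀ t, 1 ≤ t → t ≤ A.length →
        (f (t - 1) ≤ f t ∧
          (f (t - 1) = f t ↔ ¬∃ i', i + 1 ≤ i' ∧ i' ≤ k0 ∧ density (Pmat A B) i' t ≠ 0)) := by
      intro t ht htm
      have hnp : ∀ i' ∈ Finset.Icc (i + 1) k0, density (Pmat A B) i' t ≤ 0 := by
        intro i' hi'
        rw [Finset.mem_Icc] at hi'
        exact hNonpos i' (by omega) (by omega) t ht htm
      have hsumle : ∑ i' ∈ Finset.Icc (i + 1) k0, density (Pmat A B) i' t ≤ 0 :=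
        Finset.sum_nonpos hnp
      constructor
      · have := hsum t ht; omega
      · rw [show (f (t - 1) = f t) ↔
            (∑ i' ∈ Finset.Icc (i + 1) k0, density (Pmat A B) i' t = 0) by
          have := hsum t ht; constructor <;> intro <;> omega]
        rw [Finset.sum_eq_zero_iff_of_nonpos hnp]
        constructor
        · rintro hall ⟨i', h1, h2, h3⟩
          exact h3 (hall i' (Finset.mem_Icc.mpr ⟨h1, h2⟩))
        · intro hne i' hi'
          rw [Finset.mem_Icc] at hi'
          by_contra hc
          exact hne ⟨i', hi'.1, hi'.2, hc⟩
    -- monotonicity of f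
    have hmono : ∀ b, b ≤ A.length → ∀ a, a ≤ b → f a ≤ f b := by
      intro b
      induction b with
      | zero =>
        intro _ a ha
        have : a = 0 := by omega
        subst this; exact le_rfl
      | succ b ih =>
        intro hb a ha
        rcases Nat.lt_or_ge a (b + 1) with h' | h'
        · have h1 : f a ≤ f b := ih (by omega) a (by omega)
          have h2 := (hstepiff (b + 1) (by omega) hb).1
          simp only [Nat.add_sub_cancel] at h2
          omega
        · have : a = b + 1 := by omega
          subst this; exact le_rfl
    -- value of the difference
    have hDiff : ∀ t,
        ((LCS (substr B i B.length) (σ :: substr A 0 t) : ℤ) - Pmat A B i t) =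
          if f t = 0 then 1 else 0 := by
      intro t
      rw [hsubB, hsubA, hrecur (A.take t)]
      push_cast [Nat.cast_max]
      rw [← hP, ← hP]
      rcases eq_or_ne (f t) 0 with h0 | h0
      · rw [if_pos h0]
        have : Pmat A B i t = Pmat A B k0 t := by
          have := h0; simp only [hfdef] at this; omega
        rw [max_eq_right (by omega), this]; ring
      · rw [if_neg h0]
        have h1 : 1 ≤ f t := by have := hfnn t; omega
        have : 1 + Pmat A B k0 t ≤ Pmat A B i t := by
          simp only [hfdef] at h1; omega
        rw [max_eq_left this]; ring
    rw [hDiff j, hDiff (j - 1), hnext]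
    constructor
    · intro hstep
      refine ⟨k0, rfl, ?_, ?_⟩
      · -- pivot in column j
        have hle := (hstepiff j hj1 hjm).1
        have hne : f (j - 1) ≠ f j := by
          intro heq
          rw [heq] at hstep
          exact hstep rfl
        by_contra hc
        exact hne ((hstepiff j hj1 hjm).2.mpr hc)
      · intro j' hj'1 hj'm hpiv
        by_contra hc
        push_neg at hc
        -- j' < j, pivot at j' forces f j' ≥ 1, but f (j-1) must be 0
        have hne' : f (j' - 1) ≠ f j' := by
          intro heq
          exact ((hstepiff j' hj'1 hj'm).2.mp heq) hpiv
        have hle' := (hstepiff j' hj'1 hj'm).1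
        have hfj' : 1 ≤ f j' := by
          have := hfnn (j' - 1); omega
        have hmono' : f j' ≤ f (j - 1) := hmono (j - 1) (by omega) j' (by omega)
        -- so f (j-1) ≥ 1, hence f j ≥ 1 too: no step, contradiction
        have hle2 := (hstepiff j hj1 hjm).1
        have h1 : f (j - 1) ≠ 0 := by omega
        have h2 : f j ≠ 0 := by omega
        rw [if_neg h2, if_neg h1] at hstep
        exact hstep rfl
    · rintro ⟨k, hk, hpiv, hmin⟩
      have hkk0 : k = k0 := by
        have : ((k0 : ℕ∞) = (k : ℕ∞)) := hk
        exact_mod_cast this.symm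
      subst hkk0
      -- pivot at j gives f (j-1) < f j
      have hne : f (j - 1) ≠ f j := by
        intro heq
        exact ((hstepiff j hj1 hjm).2.mp heq) hpiv
      have hle := (hstepiff j hj1 hjm).1
      -- minimality gives f (j-1) = 0
      have hfj1 : f (j - 1) = 0 := by
        by_contra hc
        set U : Set ℕ := {t | f t ≠ 0} with hU
        have hUne : U.Nonempty := ⟨j - 1, hc⟩
        set t0 : ℕ := sInf U with ht0def
        have ht0mem : t0 ∈ U := Nat.sInf_mem hUne
        have ht0le : t0 ≤ j - 1 := Nat.sInf_le hc
        have ht0pos : 1 ≤ t0 := by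
          rcases Nat.eq_zero_or_pos t0 with h | h
          · rw [h] at ht0mem; exact absurd hf0 ht0mem
          · exact h
        have ht0pred : f (t0 - 1) = 0 := by
          by_contra hc'
          have := Nat.sInf_le (show (t0 - 1) ∈ U from hc')
          omega
        have hne' : f (t0 - 1) ≠ f t0 := by
          rw [ht0pred]; exact fun h => ht0mem h.symm
        have hpiv' : ∃ i', i + 1 ≤ i' ∧ i' ≤ k0 ∧ density (Pmat A B) i' t0 ≠ 0 := by
          by_contra hc'
          exact hne' ((hstepiff t0 ht0pos (by omega)).2.mpr hc')
        have := hmin t0 ht0pos (by omega) hpiv'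
        omega
      have hfj : f j ≠ 0 := by omega
      rw [if_pos hfj1, if_neg hfj]
      omega
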